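/- Let (A, μ, μ_p) be a Poisson k-algebra, B a commutative local Artinian k-algebra with maximal ideal m and residue field B/m ≅ k, Ã := A ⊗_k B, and let μ̃, μ̃_p denote the B-bilinear extensions of μ, μ_p to Ã. Let ξ, ξ_p : Ã × Ã → A ⊗_k m ⊆ Ã be B-bilinear maps with ξ symmetric and ξ_p skew-symmetric. Then (μ̃+ξ, μ̃_p+ξ_p) is a Poisson B-algebra structure on à (a commutative associative B-bilinear product together with a skew B-bilinear bracket satisfying Leibniz and Jacobi, reducing modulo m to the given Poisson structure on A) if and only if the Maurer–Cartan equations hold: [μ̃+ξ, μ̃+ξ] = 0, [μ̃+ξ, μ̃_p+ξ_p] = 0 and S(S([μ̃_p+ξ_p, μ̃_p+ξ_p])) = 2·S([μ̃_p+ξ_p, μ̃_p+ξ_p]). -/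
import Mathlib


open TensorProduct

section

/-- A map `f : W → W → W` is bilinear over the commutative ring `R`. -/
def IsBilinR (R : Type*) [CommRing R] {W : Type*} [AddCommGroup W] [Module R W]
    (f : W → W → W) : Prop :=
  (∀ a b c, f (a + b) c = f a c + f b c) ∧ (∀ (r : R) (a b), f (r • a) b = r • f a b) ∧
  (∀ a b c, f a (b + c) = f a b + f a c) ∧ (∀ (r : R) (a b), f a (r • b) = r • f a b)

/-- Gerstenhaber composition `(f ∘ g)(a,b,c) = f(g(a,b),c) − f(a,g(b,c))`. -/
def gcirc {W : Type*} [AddCommGroup W] (f g : W → W → W) : W → W → W → W :=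
  fun a b c => f (g a b) c - f a (g b c)

/-- Gerstenhaber bracket `[f,g] = f∘g + g∘f`. -/
def gbr {W : Type*} [AddCommGroup W] (f g : W → W → W) : W → W → W → W :=
  fun a b c => gcirc f g a b c + gcirc g f a b c

/-- The shuffle operator `S` on trilinear maps. -/
def Shuf {W : Type*} [AddCommGroup W] (F : W → W → W → W) : W → W → W → W :=
  fun a b c => F a b c + F a b c - F b a c - F a c b + F b c a + F c a b


section MyAux

private lemma kill2 (k : Type*) [Field k] [CharZero k]
    {W : Type*} [AddCommGroup W] [Module k W] {x : W} (h : x + x = 0) : x = 0 := by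
  have h2 : (2 : k) • x = 0 := by rw [two_smul]; exact h
  rcases smul_eq_zero.mp h2 with h3 | h3
  · exact absurd h3 (by norm_num)
  · exact h3

private lemma kill32 (k : Type*) [Field k] [CharZero k]
    {W : Type*} [AddCommGroup W] [Module k W] {x : W} (h : 32 • x = 0) : x = 0 := by
  have h2 : ((32 : ℕ) : k) • x = 0 := by rw [Nat.cast_smul_eq_nsmul]; exact h
  rcases smul_eq_zero.mp h2 with h3 | h3
  · exact absurd h3 (by norm_num)
  · exact h3

private lemma zl {W : Type*} [AddCommGroup W] {f : W → W → W} (h : ∀ a b c, f (a + b) c = f a c + f b c) (y : W) :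
    f 0 y = 0 := by
  have h0 := h 0 0 y
  rw [add_zero] at h0
  have h1 : f 0 y + f 0 y = f 0 y + 0 := by rw [add_zero]; exact h0.symm
  exact add_left_cancel h1

private lemma zr {W : Type*} [AddCommGroup W] {f : W → W → W} (h : ∀ a b c, f a (b + c) = f a b + f a c) (x : W) :
    f x 0 = 0 := by
  have h0 := h x 0 0
  rw [add_zero] at h0
  have h1 : f x 0 + f x 0 = f x 0 + 0 := by rw [add_zero]; exact h0.symm
  exact add_left_cancel h1

private lemma nl {W : Type*} [AddCommGroup W] {f : W → W → W} (h : ∀ a b c, f (a + b) c = f a c + f b c) (x y : W) :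
    f (-x) y = -f x y := by
  have h0 := h x (-x) y
  rw [add_neg_cancel, zl h] at h0
  exact (neg_eq_of_add_eq_zero_right h0.symm).symm

private lemma nr {W : Type*} [AddCommGroup W] {f : W → W → W} (h : ∀ a b c, f a (b + c) = f a b + f a c) (x y : W) :
    f x (-y) = -f x y := by
  have h0 := h x y (-y)
  rw [add_neg_cancel, zr h] at h0
  exact (neg_eq_of_add_eq_zero_right h0.symm).symm

private lemma lem_assoc (k : Type*) [Field k] [CharZero k]
    {W : Type*} [AddCommGroup W] [Module k W] {M : W → W → W} :
    (∀ a b c, M (M a b) c = M a (M b c)) ↔ gbr M M = 0 := by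
  constructor
  · intro h
    funext a b c
    show (M (M a b) c - M a (M b c)) + (M (M a b) c - M a (M b c)) = 0
    rw [h a b c]
    simp
  · intro h a b c
    have g : (M (M a b) c - M a (M b c)) + (M (M a b) c - M a (M b c)) = 0 :=
      congrFun (congrFun (congrFun h a) b) c
    have h2 := kill2 k g
    exact sub_eq_zero.mp h2

private lemma lem_leib (k : Type*) [Field k] [CharZero k]
    {W : Type*} [AddCommGroup W] [Module k W] {M P : W → W → W}
    (hMl : ∀ a b c, M (a + b) c = M a c + M b c)
    (hMs : ∀ a b, M a b = M b a) (hPs : ∀ a b, P a b = -P b a) :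
    (∀ a b c, P a (M b c) = M (P a b) c + M (P a c) b) ↔ gbr M P = 0 := by
  constructor
  · intro hL
    funext a b c
    show (M (P a b) c - M a (P b c)) + (P (M a b) c - P a (M b c)) = 0
    rw [hPs (M a b) c, hL a b c, hL c a b, hPs c a, nl hMl (P a c) b,
      hPs c b, nl hMl (P b c) a, hMs a (P b c)]
    abel
  · intro h a b c
    have g1 : (M (P a b) c - M a (P b c)) + (P (M a b) c - P a (M b c)) = 0 :=
      congrFun (congrFun (congrFun h a) b) c
    have g2 : (M (P b c) a - M b (P c a)) + (P (M b c) a - P b (M c a)) = 0 :=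
      congrFun (congrFun (congrFun h b) c) a
    have g3 : (M (P c a) b - M c (P a b)) + (P (M c a) b - P c (M a b)) = 0 :=
      congrFun (congrFun (congrFun h c) a) b
    rw [hMs a (P b c), hPs (M a b) c] at g1
    rw [hMs b (P c a), hPs (M b c) a] at g2
    rw [hMs c (P a b), hPs (M c a) b] at g3
    rw [hPs a c, nl hMl (P c a) b, ← sub_eq_zero]
    apply kill2 k
    have comb : (P a (M b c) - (M (P a b) c + -M (P c a) b))
          + (P a (M b c) - (M (P a b) c + -M (P c a) b))
        = -((M (P a b) c - M (P b c) a) + (-P c (M a b) - P a (M b c)))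
          - ((M (P b c) a - M (P c a) b) + (-P a (M b c) - P b (M c a)))
          + ((M (P c a) b - M (P a b) c) + (-P b (M c a) - P c (M a b))) := by abel
    rw [comb, g1, g2, g3]
    simp

private lemma shuf_gbr {W : Type*} [AddCommGroup W] {P : W → W → W}
    (hPl : ∀ a b c, P (a + b) c = P a c + P b c)
    (hPr : ∀ a b c, P a (b + c) = P a b + P a c)
    (hPs : ∀ a b, P a b = -P b a) (a b c : W) :
    Shuf (gbr P P) a b c
      = -(8 • (P a (P b c) + P b (P c a) + P c (P a b))) := by
  have hnl : ∀ x y, P (-x) y = -P x y := nl hPl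
  have hnr : ∀ x y, P x (-y) = -P x y := nr hPr
  have e1 : P (P a b) c = -P c (P a b) := hPs _ _
  have e2 : P (P b c) a = -P a (P b c) := hPs _ _
  have e3 : P (P c a) b = -P b (P c a) := hPs _ _
  have e4 : P a (P c b) = -P a (P b c) := by rw [hPs c b, hnr]
  have e5 : P b (P a c) = -P b (P c a) := by rw [hPs a c, hnr]
  have e6 : P c (P b a) = -P c (P a b) := by rw [hPs b a, hnr]
  have e7 : P (P b a) c = P c (P a b) := by rw [hPs b a, hnl, e1, neg_neg]
  have e8 : P (P c b) a = P a (P b c) := by rw [hPs c b, hnl, e2, neg_neg]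
  have e9 : P (P a c) b = P b (P c a) := by rw [hPs a c, hnl, e3, neg_neg]
  show gbr P P a b c + gbr P P a b c - gbr P P b a c - gbr P P a c b
      + gbr P P b c a + gbr P P c a b = _
  simp only [gbr, gcirc, e1, e2, e3, e4, e5, e6, e7, e8, e9]
  abel

private lemma lem_jac (k : Type*) [Field k] [CharZero k]
    {W : Type*} [AddCommGroup W] [Module k W] {P : W → W → W}
    (hPl : ∀ a b c, P (a + b) c = P a c + P b c)
    (hPr : ∀ a b c, P a (b + c) = P a b + P a c)
    (hPs : ∀ a b, P a b = -P b a) :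
    (∀ a b c, P a (P b c) + P b (P c a) + P c (P a b) = 0) ↔
      Shuf (Shuf (gbr P P)) = 2 • Shuf (gbr P P) := by
  have hnr : ∀ x y, P x (-y) = -P x y := nr hPr
  have T := shuf_gbr hPl hPr hPs
  constructor
  · intro hJ
    have hF : Shuf (gbr P P) = 0 := by
      funext x y z
      rw [T x y z, hJ x y z]
      simp
    rw [hF]
    funext x y z
    show (0 : W) + 0 - 0 - 0 + 0 + 0 = (2 • (0 : W → W → W → W)) x y z
    simp
  · intro hMC a b c
    have h := congrFun (congrFun (congrFun hMC a) b) c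
    have s1 : P b (P a c) + P a (P c b) + P c (P b a)
        = -(P a (P b c) + P b (P c a) + P c (P a b)) := by
      rw [hPs a c, hnr, hPs c b, hnr, hPs b a, hnr]; abel
    have s2 : P a (P c b) + P c (P b a) + P b (P a c)
        = -(P a (P b c) + P b (P c a) + P c (P a b)) := by
      rw [hPs c b, hnr, hPs b a, hnr, hPs a c, hnr]; abel
    have s3 : P b (P c a) + P c (P a b) + P a (P b c)
        = P a (P b c) + P b (P c a) + P c (P a b) := by abel
    have s4 : P c (P a b) + P a (P b c) + P b (P c a)
        = P a (P b c) + P b (P c a) + P c (P a b) := by abel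
    have hL : Shuf (Shuf (gbr P P)) a b c
        = -(48 • (P a (P b c) + P b (P c a) + P c (P a b))) := by
      show Shuf (gbr P P) a b c + Shuf (gbr P P) a b c - Shuf (gbr P P) b a c
          - Shuf (gbr P P) a c b + Shuf (gbr P P) b c a + Shuf (gbr P P) c a b = _
      rw [T a b c, T b a c, T a c b, T b c a, T c a b, s1, s2, s3, s4]
      abel
    have hR : (2 • Shuf (gbr P P)) a b c
        = -(16 • (P a (P b c) + P b (P c a) + P c (P a b))) := by
      show 2 • (Shuf (gbr P P) a b c) = _
      rw [T a b c]
      abel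
    rw [hL, hR] at h
    have h48 : 48 • (P a (P b c) + P b (P c a) + P c (P a b))
        = 16 • (P a (P b c) + P b (P c a) + P c (P a b)) := neg_inj.mp h
    have h32 : 32 • (P a (P b c) + P b (P c a) + P c (P a b)) = 0 := by
      have e : (48 : ℕ) • (P a (P b c) + P b (P c a) + P c (P a b))
          = 32 • (P a (P b c) + P b (P c a) + P c (P a b))
            + 16 • (P a (P b c) + P b (P c a) + P c (P a b)) := by abel
      rw [e] at h48
      have h48' := h48.trans (zero_add (16 • (P a (P b c) + P b (P c a) + P c (P a b)))).symm
      exact add_right_cancel h48'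
    exact kill32 k h32

end MyAux

section MyExt

variable {k : Type*} [Field k]
variable {A : Type*} [AddCommGroup A] [Module k A]
variable {B : Type*} [CommRing B] [Algebra k B]

private lemma ext_symm (f : B ⊗[k] A → B ⊗[k] A → B ⊗[k] A) (hf : IsBilinR B f)
    (g : A → A → A)
    (hfg : ∀ a a', f ((1 : B) ⊗ₜ[k] a) ((1 : B) ⊗ₜ[k] a') = (1 : B) ⊗ₜ[k] g a a')
    (hg : ∀ a b, g a b = g b a) : ∀ x y, f x y = f y x := by
  obtain ⟨hadd_l, hsmul_l, hadd_r, hsmul_r⟩ := hf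
  have hz_l : ∀ y, f 0 y = 0 := fun y => by
    have := hsmul_l 0 0 y; simpa using this
  have hz_r : ∀ x, f x 0 = 0 := fun x => by
    have := hsmul_r 0 x 0; simpa using this
  have htm : ∀ (b : B) (a : A), b ⊗ₜ[k] a = b • ((1 : B) ⊗ₜ[k] a) := by
    intro b a
    rw [TensorProduct.smul_tmul', smul_eq_mul, mul_one]
  intro x
  induction x using TensorProduct.induction_on with
  | zero => intro y; rw [hz_l, hz_r]
  | tmul b a =>
    intro y
    induction y using TensorProduct.induction_on with
    | zero => rw [hz_l, hz_r]
    | tmul b' a' =>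
      rw [htm b a, htm b' a']
      rw [hsmul_l, hsmul_l, hsmul_r, hsmul_r, hfg, hfg, hg a' a]
      exact smul_comm b b' _
    | add y1 y2 ih1 ih2 => rw [hadd_r, hadd_l, ih1, ih2]
  | add x1 x2 ih1 ih2 =>
    intro y
    rw [hadd_l, hadd_r, ih1 y, ih2 y]

private lemma ext_skew (f : B ⊗[k] A → B ⊗[k] A → B ⊗[k] A) (hf : IsBilinR B f)
    (g : A → A → A)
    (hfg : ∀ a a', f ((1 : B) ⊗ₜ[k] a) ((1 : B) ⊗ₜ[k] a') = (1 : B) ⊗ₜ[k] g a a')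
    (hg : ∀ a b, g a b = -g b a) : ∀ x y, f x y = -f y x := by
  obtain ⟨hadd_l, hsmul_l, hadd_r, hsmul_r⟩ := hf
  have hz_l : ∀ y, f 0 y = 0 := fun y => by
    have := hsmul_l 0 0 y; simpa using this
  have hz_r : ∀ x, f x 0 = 0 := fun x => by
    have := hsmul_r 0 x 0; simpa using this
  have htm : ∀ (b : B) (a : A), b ⊗ₜ[k] a = b • ((1 : B) ⊗ₜ[k] a) := by
    intro b a
    rw [TensorProduct.smul_tmul', smul_eq_mul, mul_one]
  intro x
  induction x using TensorProduct.induction_on with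
  | zero => intro y; rw [hz_l, hz_r, neg_zero]
  | tmul b a =>
    intro y
    induction y using TensorProduct.induction_on with
    | zero => rw [hz_l, hz_r, neg_zero]
    | tmul b' a' =>
      rw [htm b a, htm b' a']
      rw [hsmul_l, hsmul_l, hsmul_r, hsmul_r, hfg, hfg, hg a' a,
        TensorProduct.tmul_neg, smul_neg, smul_neg, neg_neg]
      exact smul_comm b b' _
    | add y1 y2 ih1 ih2 => rw [hadd_r, hadd_l, ih1, ih2, neg_add]
  | add x1 x2 ih1 ih2 =>
    intro y
    rw [hadd_l, hadd_r, ih1 y, ih2 y, neg_add]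

end MyExt

variable {k : Type*} [Field k] [CharZero k]
variable {A : Type*} [AddCommGroup A] [Module k A]
variable {B : Type*} [CommRing B] [Algebra k B] [IsLocalRing B] [IsArtinianRing B]

/-- Let `(A,μ,μ_p)` be a Poisson `k`-algebra, `B` a commutative local Artinian
`k`-algebra with maximal ideal `m` and residue field `k`, and `Ã := A ⊗_k B` (realized
as the base change `B ⊗[k] A`) with the `B`-bilinear extensions `μ̃`, `μ̃_p` of `μ`, `μ_p`.
If `ξ, ξ_p : Ã × Ã → A ⊗ m` are `B`-bilinear with `ξ` symmetric and `ξ_p` skew-symmetric,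
then `(μ̃+ξ, μ̃_p+ξ_p)` is a Poisson `B`-algebra structure on `Ã` (commutative associative
product and skew bracket satisfying Leibniz and Jacobi, reducing mod `m` to the given
structure on `A`) iff the Maurer–Cartan equations hold:
`[μ̃+ξ,μ̃+ξ] = 0`, `[μ̃+ξ,μ̃_p+ξ_p] = 0` and `S(S([μ̃_p+ξ_p,μ̃_p+ξ_p])) = 2·S([μ̃_p+ξ_p,μ̃_p+ξ_p])`. -/
theorem stmt10
    -- the Poisson structure (μ, μ_p) on A
    (μ μp : A → A → A) (hμbil : IsBilinR k μ) (hμpbil : IsBilinR k μp)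
    (hμsymm : ∀ a b, μ a b = μ b a) (hμassoc : ∀ a b c, μ (μ a b) c = μ a (μ b c))
    (hμpskew : ∀ a b, μp a b = - μp b a)
    (hLeibniz : ∀ a b c, μp a (μ b c) = μ (μp a b) c + μ (μp a c) b)
    (hJacobi : ∀ a b c, μp a (μp b c) + μp b (μp c a) + μp c (μp a b) = 0)
    -- B has residue field k
    (hres : Function.Bijective (algebraMap k (IsLocalRing.ResidueField B)))
    -- the B-bilinear extensions of μ and μ_p to Ã = B ⊗[k] A
    (μt μpt : B ⊗[k] A → B ⊗[k] A → B ⊗[k] A)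
    (hμtbil : IsBilinR B μt) (hμptbil : IsBilinR B μpt)
    (hμtext : ∀ a a' : A, μt ((1 : B) ⊗ₜ[k] a) ((1 : B) ⊗ₜ[k] a') = (1 : B) ⊗ₜ[k] μ a a')
    (hμptext : ∀ a a' : A, μpt ((1 : B) ⊗ₜ[k] a) ((1 : B) ⊗ₜ[k] a') = (1 : B) ⊗ₜ[k] μp a a')
    -- the perturbations ξ, ξ_p with values in A ⊗ m
    (ξ ξp : B ⊗[k] A → B ⊗[k] A → B ⊗[k] A)
    (hξbil : IsBilinR B ξ) (hξpbil : IsBilinR B ξp)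
    (hξsymm : ∀ x y, ξ x y = ξ y x) (hξpskew : ∀ x y, ξp x y = - ξp y x)
    (hξval : ∀ x y, ξ x y ∈
      (IsLocalRing.maximalIdeal B) • (⊤ : Submodule B (B ⊗[k] A)))
    (hξpval : ∀ x y, ξp x y ∈
      (IsLocalRing.maximalIdeal B) • (⊤ : Submodule B (B ⊗[k] A))) :
    -- (μ̃+ξ, μ̃_p+ξ_p) is a Poisson B-algebra structure on Ã iff Maurer–Cartan holds
    ((∀ x y z, (fun x y => μt x y + ξ x y) ((fun x y => μt x y + ξ x y) x y) z
        = (fun x y => μt x y + ξ x y) x ((fun x y => μt x y + ξ x y) y z)) ∧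
     (∀ x y z, (fun x y => μpt x y + ξp x y) x ((fun x y => μt x y + ξ x y) y z)
        = (fun x y => μt x y + ξ x y) ((fun x y => μpt x y + ξp x y) x y) z
          + (fun x y => μt x y + ξ x y) ((fun x y => μpt x y + ξp x y) x z) y) ∧
     (∀ x y z, (fun x y => μpt x y + ξp x y) x ((fun x y => μpt x y + ξp x y) y z)
          + (fun x y => μpt x y + ξp x y) y ((fun x y => μpt x y + ξp x y) z x)
          + (fun x y => μpt x y + ξp x y) z ((fun x y => μpt x y + ξp x y) x y) = 0))
    ↔
    (gbr (fun x y => μt x y + ξ x y) (fun x y => μt x y + ξ x y) = 0 ∧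
     gbr (fun x y => μt x y + ξ x y) (fun x y => μpt x y + ξp x y) = 0 ∧
     Shuf (Shuf (gbr (fun x y => μpt x y + ξp x y) (fun x y => μpt x y + ξp x y)))
       = 2 • Shuf (gbr (fun x y => μpt x y + ξp x y) (fun x y => μpt x y + ξp x y))) := by
  have hμtsymm := ext_symm μt hμtbil μ hμtext hμsymm
  have hμptskew := ext_skew μpt hμptbil μp hμptext hμpskew
  have hMl : ∀ x y z : B ⊗[k] A,
      μt (x + y) z + ξ (x + y) z = (μt x z + ξ x z) + (μt y z + ξ y z) := fun x y z => by
    rw [hμtbil.1, hξbil.1]; abel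
  have hMs : ∀ x y : B ⊗[k] A, μt x y + ξ x y = μt y x + ξ y x := fun x y => by
    rw [hμtsymm, hξsymm]
  have hPl : ∀ x y z : B ⊗[k] A,
      μpt (x + y) z + ξp (x + y) z = (μpt x z + ξp x z) + (μpt y z + ξp y z) := fun x y z => by
    rw [hμptbil.1, hξpbil.1]; abel
  have hPr : ∀ x y z : B ⊗[k] A,
      μpt x (y + z) + ξp x (y + z) = (μpt x y + ξp x y) + (μpt x z + ξp x z) := fun x y z => by
    rw [hμptbil.2.2.1, hξpbil.2.2.1]; abel
  have hPs : ∀ x y : B ⊗[k] A, μpt x y + ξp x y = -(μpt y x + ξp y x) := fun x y => by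
    rw [hμptskew, hξpskew x y, neg_add]
  constructor
  · rintro ⟨h1, h2, h3⟩
    exact ⟨(lem_assoc k (M := fun x y => μt x y + ξ x y)).mp h1,
      (lem_leib k (M := fun x y => μt x y + ξ x y)
        (P := fun x y => μpt x y + ξp x y) hMl hMs hPs).mp h2,
      (lem_jac k (P := fun x y => μpt x y + ξp x y) hPl hPr hPs).mp h3⟩
  · rintro ⟨h1, h2, h3⟩
    exact ⟨(lem_assoc k (M := fun x y => μt x y + ξ x y)).mpr h1,
      (lem_leib k (M := fun x y => μt x y + ξ x y)
        (P := fun x y => μpt x y + ξp x y) hMl hMs hPs).mpr h2,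
      (lem_jac k (P := fun x y => μpt x y + ξp x y) hPl hPr hPs).mpr h3⟩

end
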